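/- arXiv:2507.11228 — 2 statements merged into one kernel-verified Lean document; each statement's English description precedes it below -/
import Mathlib

section
/- For every w* ∈ ℝ and every ε > 0, with σ the sigmoid and R(w) = (σ(w) - σ(w*))/(w - w*), the following exact identity holds: σ'(w*)/R(w*+ε) + σ'(w*)/R(w*-ε) = ε·sinh(ε)/(cosh(ε) - 1) = ε/tanh(ε/2). -/
noncomputable def sigmoid (w : ℝ) : ℝ := 1 / (1 + Real.exp (-w))

lemma sigmoid_hasDerivAt (w : ℝ) :
    HasDerivAt sigmoid (Real.exp (-w) / (1 + Real.exp (-w)) ^ 2) w := by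
  have h1 : HasDerivAt (fun w : ℝ => 1 + Real.exp (-w)) (-Real.exp (-w)) w := by
    have := (Real.hasDerivAt_exp (-w)).comp w ((hasDerivAt_id w).neg)
    simpa using this.const_add 1
  have h2 := h1.inv (by positivity)
  have : sigmoid = fun w : ℝ => (1 + Real.exp (-w))⁻¹ := by
    funext w; simp [sigmoid, one_div]
  rw [this]
  convert h2 using 1
  · rfl
  · rfl
  · rfl
  · ring

theorem secant_slope_reciprocal_identity
    (wstar ε : ℝ) (hε : 0 < ε)
    (R : ℝ → ℝ)
    (hR : ∀ w, w ≠ wstar → R w = (sigmoid w - sigmoid wstar) / (w - wstar)) :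
    deriv sigmoid wstar / R (wstar + ε) + deriv sigmoid wstar / R (wstar - ε)
        = ε * Real.sinh ε / (Real.cosh ε - 1) ∧
    ε * Real.sinh ε / (Real.cosh ε - 1) = ε / Real.tanh (ε / 2) := by
  set x := Real.exp (-wstar) with hxdef
  set u := Real.exp ε with hudef
  have hx : 0 < x := Real.exp_pos _
  have hu1 : 1 < u := by
    rw [hudef]; exact Real.one_lt_exp_iff.mpr hε
  have hu : 0 < u := lt_trans one_pos hu1
  have hεne : ε ≠ 0 := ne_of_gt hε
  -- sigmoid values
  have e0 : sigmoid wstar = 1 / (1 + x) := rfl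
  have e1 : sigmoid (wstar + ε) = 1 / (1 + x / u) := by
    rw [sigmoid, neg_add, Real.exp_add, Real.exp_neg ε, ← div_eq_mul_inv]
  have e2 : sigmoid (wstar - ε) = 1 / (1 + x * u) := by
    rw [sigmoid, show -(wstar - ε) = -wstar + ε by ring, Real.exp_add]
  -- derivative
  have hderiv : deriv sigmoid wstar = x / (1 + x) ^ 2 := (sigmoid_hasDerivAt wstar).deriv
  -- R values
  have hRp : R (wstar + ε) = (x * (u - 1) / ((u + x) * (1 + x))) / ε := by
    rw [hR _ (by intro h; apply hεne; linarith [h]), e1, e0]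
    have h1 : (0:ℝ) < 1 + x / u := by positivity
    have h2 : (0:ℝ) < 1 + x := by positivity
    have h3 : (0:ℝ) < u + x := by positivity
    rw [add_sub_cancel_left]
    field_simp
    ring
  have hRm : R (wstar - ε) = (x * (1 - u) / ((1 + x * u) * (1 + x))) / (-ε) := by
    rw [hR _ (by intro h; apply hεne; linarith [h]), e2, e0]
    have h2 : (0:ℝ) < 1 + x := by positivity
    have h4 : (0:ℝ) < 1 + x * u := by positivity
    have : wstar - ε - wstar = -ε := by ring
    rw [this]
    field_simp
    ring
  have hu1' : u - 1 ≠ 0 := by linarith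
  have hxne : x ≠ 0 := ne_of_gt hx
  have h2 : (1:ℝ) + x ≠ 0 := by positivity
  have h3 : u + x ≠ 0 := by positivity
  have h4 : (1:ℝ) + x * u ≠ 0 := by positivity
  have hune : u ≠ 0 := ne_of_gt hu
  -- key value of RHS
  have hsq : (u - 1) ^ 2 ≠ 0 := pow_ne_zero _ hu1'
  have hcosh1 : Real.cosh ε - 1 = (u - 1) ^ 2 / (2 * u) := by
    rw [Real.cosh_eq, Real.exp_neg ε]
    field_simp
    ring
  have hsinh1 : Real.sinh ε = (u - u⁻¹) / 2 := by
    rw [Real.sinh_eq, Real.exp_neg ε]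
  have hrhs : ε * Real.sinh ε / (Real.cosh ε - 1) = ε * (u + 1) / (u - 1) := by
    rw [hsinh1, hcosh1]
    field_simp
    ring
  constructor
  · have t1 : x / (1 + x) ^ 2 / (x * (u - 1) / ((u + x) * (1 + x)) / ε)
        = ε * (u + x) / ((1 + x) * (u - 1)) := by
      field_simp
    have h5 : 1 - u ≠ 0 := fun h => hu1' (by linarith)
    have t2 : x / (1 + x) ^ 2 / (x * (1 - u) / ((1 + x * u) * (1 + x)) / -ε)
        = ε * (1 + x * u) / ((1 + x) * (u - 1)) := by
      rw [div_neg, div_neg]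
      field_simp
      ring
    rw [hderiv, hRp, hRm, hrhs, t1, t2, ← add_div]
    rw [div_eq_div_iff (by positivity) hu1']
    ring
  · -- second identity
    have hs : 0 < Real.sinh (ε / 2) := Real.sinh_pos_iff.mpr (by linarith)
    have hc : 0 < Real.cosh (ε / 2) := Real.cosh_pos _
    have hsinh : Real.sinh ε = 2 * Real.sinh (ε / 2) * Real.cosh (ε / 2) := by
      have := Real.sinh_two_mul (ε / 2)
      rw [show 2 * (ε / 2) = ε by ring] at this
      linarith
    have hcosh : Real.cosh ε - 1 = 2 * Real.sinh (ε / 2) ^ 2 := by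
      have h1 := Real.cosh_two_mul (ε / 2)
      have h2 := Real.cosh_sq (ε / 2)
      rw [show 2 * (ε / 2) = ε by ring] at h1
      rw [h2] at h1
      linarith
    rw [hsinh, hcosh, Real.tanh_eq_sinh_div_cosh]
    field_simp
end

section
/- Fix w* > 0, γ ∈ (0,2), and define T(w) = w - (γ/σ'(w*))·(σ(w) - σ(w*)). Then for every initialization w_0 ∈ ℝ, the sequence w_{t+1} = T(w_t) converges to w*. (Global convergence of gradient descent with step size γ/λ, λ = σ'(w*), on 1-D non-separable logistic regression with all data of unit magnitude.) -/
lemma sig_denom_pos (w : ℝ) : 0 < 1 + Real.exp (-w) := by positivity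

lemma sig_pos (w : ℝ) : 0 < sigmoid w := by
  unfold sigmoid; positivity

lemma sig_lt_one (w : ℝ) : sigmoid w < 1 := by
  unfold sigmoid
  rw [div_lt_one (sig_denom_pos w)]
  linarith [Real.exp_pos (-w)]

lemma sig_strictMono : StrictMono sigmoid := by
  intro a b hab
  unfold sigmoid
  have := Real.exp_lt_exp.2 (neg_lt_neg hab)
  have hb := sig_denom_pos b
  rw [div_lt_div_iff₀ (sig_denom_pos a) hb]
  linarith

lemma sig_cont : Continuous sigmoid := by
  unfold sigmoid
  exact continuous_const.div (continuous_const.add (Real.continuous_exp.comp continuous_neg))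
    (fun w => ne_of_gt (sig_denom_pos w))

noncomputable def logit (y : ℝ) : ℝ := Real.log y - Real.log (1 - y)

lemma sig_logit {y : ℝ} (h0 : 0 < y) (h1 : y < 1) : sigmoid (logit y) = y := by
  unfold sigmoid logit
  rw [neg_sub, Real.exp_sub, Real.exp_log (by linarith), Real.exp_log h0]
  field_simp
  ring

lemma logit_sig (w : ℝ) : logit (sigmoid w) = w :=
  sig_strictMono.injective (sig_logit (sig_pos w) (sig_lt_one w))

lemma hasDerivAt_sig (w : ℝ) :
    HasDerivAt sigmoid (sigmoid w * (1 - sigmoid w)) w := by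
  have h1 : HasDerivAt (fun w : ℝ => 1 + Real.exp (-w)) (-Real.exp (-w)) w := by
    have := (Real.hasDerivAt_exp (-w)).comp w (hasDerivAt_neg w)
    simpa using this.const_add 1
  have h2 : HasDerivAt (fun w : ℝ => 1 / (1 + Real.exp (-w)))
      (-(-Real.exp (-w)) / (1 + Real.exp (-w))^2) w := by
    have := ((hasDerivAt_const w (1:ℝ)).div h1 (ne_of_gt (sig_denom_pos w)))
    convert this using 1
    · rfl
    · rfl
    · rfl
    · ring
  have heq : -(-Real.exp (-w)) / (1 + Real.exp (-w))^2
      = sigmoid w * (1 - sigmoid w) := by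
    unfold sigmoid
    have h := ne_of_gt (sig_denom_pos w)
    field_simp
    ring
  rw [heq] at h2
  exact h2

lemma deriv_sig (w : ℝ) : deriv sigmoid w = sigmoid w * (1 - sigmoid w) :=
  (hasDerivAt_sig w).deriv

lemma hasDerivAt_logit {x : ℝ} (h0 : 0 < x) (h1 : x < 1) :
    HasDerivAt logit (1/x + 1/(1-x)) x := by
  have l1 : HasDerivAt Real.log x⁻¹ x := Real.hasDerivAt_log (ne_of_gt h0)
  have l2 : HasDerivAt (fun y : ℝ => Real.log (1 - y)) (-(1-x)⁻¹) x := by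
    have := (Real.hasDerivAt_log (ne_of_gt (by linarith : (0:ℝ) < 1 - x))).comp x
      ((hasDerivAt_id x).const_sub 1)
    simpa [Function.comp_def] using this
  have h := l1.sub l2
  have : x⁻¹ - -(1-x)⁻¹ = 1/x + 1/(1-x) := by
    rw [one_div, one_div]; ring
  rw [this] at h
  exact h

lemma pair_ineq (a t : ℝ) (hat : 0 < a - t) (ht : 0 ≤ t) : 2/a ≤ 1/(a+t) + 1/(a-t) := by
  have ha : 0 < a := by linarith
  have h1 : 0 < a + t := by linarith
  rw [div_add_div _ _ (ne_of_gt h1) (ne_of_gt hat), div_le_div_iff₀ ha (by positivity)]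
  nlinarith [sq_nonneg t]

lemma chord (s d : ℝ) (h0 : 0 < s - d) (h1 : s + d < 1) (hd : 0 ≤ d) :
    2*d/(s*(1-s)) ≤ logit (s+d) - logit (s-d) := by
  have hs0 : 0 < s := by linarith
  have hs1 : s < 1 := by linarith
  set f : ℝ → ℝ := fun t => logit (s+t) - logit (s-t) - 2/(s*(1-s))*t with hfdef
  have hder : ∀ t ∈ Set.Icc (0:ℝ) d, HasDerivAt f
      ((1/(s+t) + 1/(1-(s+t))) + (1/(s-t) + 1/(1-(s-t))) - 2/(s*(1-s))) t := by
    intro t ht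
    obtain ⟨ht0, htd⟩ := ht
    have hp1 : 0 < s + t := by linarith
    have hp2 : s + t < 1 := by linarith
    have hp3 : 0 < s - t := by linarith
    have hp4 : s - t < 1 := by linarith
    have d1 : HasDerivAt (fun t : ℝ => logit (s+t)) ((1/(s+t) + 1/(1-(s+t))) * 1) t :=
      (hasDerivAt_logit hp1 hp2).comp t ((hasDerivAt_id t).const_add s)
    have d2 : HasDerivAt (fun t : ℝ => logit (s-t)) ((1/(s-t) + 1/(1-(s-t))) * (-1)) t :=
      (hasDerivAt_logit hp3 hp4).comp t ((hasDerivAt_id t).const_sub s)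
    have d3 : HasDerivAt (fun t : ℝ => 2/(s*(1-s))*t) (2/(s*(1-s))) t := by
      simpa using (hasDerivAt_id t).const_mul (2/(s*(1-s)))
    have := (d1.sub d2).sub d3
    convert this using 1
    · rfl
    · rfl
    · rfl
    · ring
  have hmono : MonotoneOn f (Set.Icc 0 d) := by
    apply monotoneOn_of_deriv_nonneg (convex_Icc 0 d)
    · exact fun t ht => (hder t ht).continuousAt.continuousWithinAt
    · intro t ht
      rw [interior_Icc] at ht
      exact ((hder t ⟨le_of_lt ht.1, le_of_lt ht.2⟩).differentiableAt).differentiableWithinAt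
    · intro t ht
      rw [interior_Icc] at ht
      rw [(hder t ⟨le_of_lt ht.1, le_of_lt ht.2⟩).deriv]
      have e1 : 2/s ≤ 1/(s+t) + 1/(s-t) := pair_ineq s t (by linarith [ht.2]) (le_of_lt ht.1)
      have e2 : 2/(1-s) ≤ 1/(1-(s+t)) + 1/(1-(s-t)) := by
        have := pair_ineq (1-s) t (by linarith [ht.2]) (le_of_lt ht.1)
        have a1 : 1-s+t = 1-(s-t) := by ring
        have a2 : 1-s-t = 1-(s+t) := by ring
        rw [a1, a2] at this
        linarith
      have e3 : 2/s + 2/(1-s) = 2/(s*(1-s)) := by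
        rw [div_add_div _ _ (ne_of_gt hs0) (ne_of_gt (by linarith : (0:ℝ) < 1 - s))]
        congr 1
        ring
      linarith
  have h0d : (0:ℝ) ∈ Set.Icc (0:ℝ) d := ⟨le_refl 0, hd⟩
  have hdd : d ∈ Set.Icc (0:ℝ) d := ⟨hd, le_refl d⟩
  have := hmono h0d hdd hd
  have hf0 : f 0 = 0 := by simp [hfdef]
  have hfd : f d = logit (s+d) - logit (s-d) - 2/(s*(1-s))*d := rfl
  rw [hf0, hfd] at this
  have : 2/(s*(1-s))*d ≤ logit (s+d) - logit (s-d) := by linarith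
  calc 2*d/(s*(1-s)) = 2/(s*(1-s))*d := by ring
    _ ≤ _ := this

lemma sig_zero : sigmoid 0 = 1/2 := by
  unfold sigmoid
  norm_num

lemma lyap (wstar γ : ℝ) (hwstar : 0 < wstar) (hγ0 : 0 < γ) (hγ2 : γ < 2)
    (c : ℝ) (hc : c = γ / (sigmoid wstar * (1 - sigmoid wstar)))
    (w : ℝ) (hw : w ≠ wstar) :
    |sigmoid (w - c*(sigmoid w - sigmoid wstar)) - sigmoid wstar|
      < |sigmoid w - sigmoid wstar| := by
  set s := sigmoid wstar with hs
  set y := sigmoid w with hy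
  have hs0 : 0 < s := sig_pos wstar
  have hs1 : s < 1 := sig_lt_one wstar
  have hy0 : 0 < y := sig_pos w
  have hy1 : y < 1 := sig_lt_one w
  have hshalf : 1/2 < s := by
    have := sig_strictMono hwstar
    rw [sig_zero] at this
    exact this
  have hP : 0 < s * (1 - s) := by nlinarith
  have hcpos : 0 < c := by rw [hc]; positivity
  have hcP : c * (s * (1 - s)) = γ := by
    rw [hc]; field_simp
    exact div_self (sub_pos.2 hs1).ne'
  have hyne : y ≠ s := fun h => hw (sig_strictMono.injective h)
  set Tw := w - c * (y - s) with hTw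
  rcases lt_or_gt_of_ne hyne with hlt | hgt
  · -- y < s, left case; let l = s - y > 0
    set l := s - y with hl
    have hlpos : 0 < l := by simp [hl]; linarith
    have hTww : Tw = w + c * l := by rw [hTw, hl]; ring
    have hwT : w < Tw := by rw [hTww]; nlinarith
    have hlow : y < sigmoid Tw := by
      rw [hy]; exact sig_strictMono hwT
    have hup : sigmoid Tw < s + l := by
      by_contra hC
      push_neg at hC
      have hd1 : 0 < s - l := by simp [hl]; linarith
      have hd2 : s + l < 1 := lt_of_le_of_lt hC (sig_lt_one Tw)
      have hch := chord s l hd1 hd2 (le_of_lt hlpos)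
      have hTwge : logit (s + l) ≤ Tw := by
        have h1 : sigmoid (logit (s+l)) ≤ sigmoid Tw := by
          rw [sig_logit (by linarith) hd2]; exact hC
        exact (sig_strictMono.le_iff_le).1 h1
      have hweq : w = logit (s - l) := by
        have : s - l = y := by rw [hl]; ring
        rw [this, hy, logit_sig]
      have hstep : 2*l/(s*(1-s)) ≤ c * l := by
        calc 2*l/(s*(1-s)) ≤ logit (s+l) - logit (s-l) := hch
          _ ≤ Tw - w := by rw [hweq]; linarith
          _ = c * l := by rw [hTww]; ring
      have := mul_le_mul_of_nonneg_right hstep (le_of_lt hP)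
      rw [div_mul_cancel₀ _ (ne_of_gt hP)] at this
      nlinarith
    have habs : |y - s| = l := by rw [abs_of_neg (by linarith), hl]; ring
    rw [habs, abs_lt]
    constructor <;> [linarith; linarith]
  · -- y > s, right case; let d = y - s > 0
    set d := y - s with hd
    have hdpos : 0 < d := by simp [hd]; linarith
    have hTww : Tw = w - c * d := by rw [hTw, hd]
    have hwT : Tw < w := by rw [hTww]; nlinarith
    have hup : sigmoid Tw < y := by
      rw [hy]; exact sig_strictMono hwT
    have hlow : s - d < sigmoid Tw := by
      by_contra hC
      push_neg at hC
      have hd1 : 0 < s - d := by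
        have : d < 1 - s := by simp [hd]; linarith
        linarith
      have hd2 : s + d < 1 := by
        have : s + d = y := by rw [hd]; ring
        rw [this]; exact hy1
      have hch := chord s d hd1 hd2 (le_of_lt hdpos)
      have hTwle : Tw ≤ logit (s - d) := by
        have h1 : sigmoid Tw ≤ sigmoid (logit (s-d)) := by
          rw [sig_logit hd1 (by linarith)]; exact hC
        exact (sig_strictMono.le_iff_le).1 h1
      have hweq : w = logit (s + d) := by
        have : s + d = y := by rw [hd]; ring
        rw [this, hy, logit_sig]
      have hstep : 2*d/(s*(1-s)) ≤ c * d := by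
        calc 2*d/(s*(1-s)) ≤ logit (s+d) - logit (s-d) := hch
          _ ≤ w - Tw := by rw [hweq]; linarith
          _ = c * d := by rw [hTww]; ring
      have := mul_le_mul_of_nonneg_right hstep (le_of_lt hP)
      rw [div_mul_cancel₀ _ (ne_of_gt hP)] at this
      nlinarith
    have habs : |y - s| = d := by rw [abs_of_pos (by linarith)]
    rw [habs, abs_lt]
    constructor <;> [linarith; linarith]

theorem global_convergence_1d_sphere
    (wstar γ : ℝ) (hwstar : 0 < wstar) (hγ0 : 0 < γ) (hγ2 : γ < 2)
    (T : ℝ → ℝ)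
    (hT : ∀ w, T w = w - (γ / deriv sigmoid wstar) * (sigmoid w - sigmoid wstar)) :
    ∀ w0 : ℝ, Filter.Tendsto (fun t => T^[t] w0) Filter.atTop (nhds wstar) := by
  intro w0
  set s := sigmoid wstar with hsdef
  have hs0 : 0 < s := sig_pos wstar
  have hs1 : s < 1 := sig_lt_one wstar
  have hshalf : 1/2 < s := by
    have := sig_strictMono hwstar
    rw [sig_zero] at this
    exact this
  set c := γ / (s * (1 - s)) with hc
  have hcpos : 0 < c := by
    rw [hc]
    exact div_pos hγ0 (by nlinarith)
  have hT' : ∀ w, T w = w - c * (sigmoid w - s) := by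
    intro w
    rw [hT, deriv_sig]
  have hTcont : Continuous T := by
    have : T = fun w => w - c * (sigmoid w - s) := funext hT'
    rw [this]
    exact continuous_id.sub (continuous_const.mul (sig_cont.sub continuous_const))
  set W : ℕ → ℝ := fun t => T^[t] w0 with hW
  have hWsucc : ∀ t, W (t+1) = T (W t) := fun t => Function.iterate_succ_apply' T t w0
  set V : ℕ → ℝ := fun t => |sigmoid (W t) - s| with hV
  have keyV : ∀ t, V (t+1) ≤ V t := by
    intro t
    by_cases hwt : W t = wstar
    · have : W (t+1) = wstar := by
        rw [hWsucc t, hwt, hT' wstar]; simp [hsdef]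
      simp only [hV, this, hwt]
      exact le_refl _
    · have := lyap wstar γ hwstar hγ0 hγ2 c hc (W t) hwt
      have heq : W (t+1) = W t - c * (sigmoid (W t) - s) := by rw [hWsucc t, hT' (W t)]
      simp only [hV]
      rw [heq]
      exact le_of_lt this
  have hanti : Antitone V := antitone_nat_of_succ_le keyV
  have hbdd : BddBelow (Set.range V) := ⟨0, by rintro x ⟨t, rfl⟩; exact abs_nonneg _⟩
  set v := ⨅ t, V t with hvdef
  have hVtend : Filter.Tendsto V Filter.atTop (nhds v) := tendsto_atTop_ciInf hanti hbdd
  have hvnn : 0 ≤ v := le_ciInf (fun t => abs_nonneg _)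
  have hvle : ∀ t, v ≤ V t := fun t => ciInf_le hbdd t
  have hVlt : ∀ t, V t < s := by
    intro t
    have h0 := sig_pos (W t)
    have h1 := sig_lt_one (W t)
    simp only [hV]
    rcases le_or_gt (sigmoid (W t)) s with h | h
    · rw [abs_of_nonpos (by linarith)]; linarith
    · rw [abs_of_pos (by linarith)]; linarith
  have hv0 : v = 0 := by
    by_contra hne
    have hvpos : 0 < v := lt_of_le_of_ne hvnn (Ne.symm hne)
    set y : ℕ → ℝ := fun t => sigmoid (W t) with hy
    have hymem : ∀ t, y t ∈ Set.Icc (0:ℝ) 1 :=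
      fun t => ⟨le_of_lt (sig_pos _), le_of_lt (sig_lt_one _)⟩
    obtain ⟨ybar, hybarmem, φ, hφ, hyφ⟩ := isCompact_Icc.tendsto_subseq hymem
    have hVφ : Filter.Tendsto (V ∘ φ) Filter.atTop (nhds v) := hVtend.comp hφ.tendsto_atTop
    have hVφ' : Filter.Tendsto (V ∘ φ) Filter.atTop (nhds (|ybar - s|)) := by
      have hcontabs : Continuous (fun z : ℝ => |z - s|) :=
        (continuous_id.sub continuous_const).abs
      have := (hcontabs.tendsto ybar).comp hyφ
      exact this
    have habs : |ybar - s| = v := tendsto_nhds_unique hVφ' hVφ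
    have hyne0 : ybar ≠ 0 := by
      intro h
      rw [h] at habs
      have : |(0:ℝ) - s| = s := by rw [abs_of_nonpos (by linarith)]; ring
      rw [this] at habs
      have := hvle 0
      have := hVlt 0
      linarith
    have hyne1 : ybar ≠ 1 := by
      intro h
      rw [h] at habs
      have h1s : |(1:ℝ) - s| = 1 - s := abs_of_pos (by linarith)
      rw [h1s] at habs
      -- all iterates stay left
      have hyle : ∀ t, sigmoid (W t) ≤ s := by
        intro t
        by_contra hgt
        push_neg at hgt
        have hVt : V t = sigmoid (W t) - s := by
          simp only [hV]; rw [abs_of_pos (by linarith)]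
        have h1 := hvle t
        have h2 := sig_lt_one (W t)
        rw [hVt] at h1
        linarith
      have hstep : ∀ t, W t + c*(1-s) ≤ W (t+1) := by
        intro t
        rw [hWsucc t, hT' (W t)]
        have hVt : V t = s - sigmoid (W t) := by
          simp only [hV]; rw [abs_of_nonpos (by linarith [hyle t])]; ring
        have hVtge : 1 - s ≤ V t := by rw [habs]; exact hvle t
        have h1 : sigmoid (W t) - s ≤ -(1-s) := by
          rw [hVt] at hVtge; linarith
        have := mul_le_mul_of_nonneg_left h1 (le_of_lt hcpos)
        linarith
      have hlin : ∀ t : ℕ, W 0 + t*(c*(1-s)) ≤ W t := by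
        intro t
        induction t with
        | zero => simp
        | succ n ih =>
          have := hstep n
          push_cast
          push_cast at ih
          linarith
      obtain ⟨t, ht⟩ := exists_nat_gt ((wstar - W 0)/(c*(1-s)))
      have hcs : 0 < c*(1-s) := mul_pos hcpos (by linarith)
      rw [div_lt_iff₀ hcs] at ht
      have hWt : wstar < W t := by
        have := hlin t
        linarith
      have := sig_strictMono hWt
      linarith [hyle t]
    have hybar0 : 0 < ybar := lt_of_le_of_ne hybarmem.1 (Ne.symm hyne0)
    have hybar1 : ybar < 1 := lt_of_le_of_ne hybarmem.2 hyne1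
    set wbar := logit ybar with hwbar
    have hsigwbar : sigmoid wbar = ybar := sig_logit hybar0 hybar1
    have hlogitcont : ContinuousAt logit ybar := by
      apply ContinuousAt.sub
      · exact Real.continuousAt_log (ne_of_gt hybar0)
      · exact (Real.continuousAt_log (by intro h; rw [sub_eq_zero] at h; exact hyne1 h.symm)).comp
          ((continuous_const.sub continuous_id).continuousAt)
    have hWφ : Filter.Tendsto (fun k => W (φ k)) Filter.atTop (nhds wbar) := by
      have h := hlogitcont.tendsto.comp hyφ
      have heq : (fun k => W (φ k)) = logit ∘ (y ∘ φ) := by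
        funext k
        exact (logit_sig (W (φ k))).symm
      rw [heq]
      exact h
    have hwbarne : wbar ≠ wstar := by
      intro h
      have hys : ybar = s := by rw [← hsigwbar, h]
      rw [hys] at habs
      simp at habs
      linarith
    have hVfun_cont : Continuous (fun w => |sigmoid (T w) - s|) :=
      ((sig_cont.comp hTcont).sub continuous_const).abs
    have h1 : Filter.Tendsto (fun k => |sigmoid (T (W (φ k))) - s|) Filter.atTop
        (nhds (|sigmoid (T wbar) - s|)) :=
      (hVfun_cont.tendsto wbar).comp hWφ
    have h2 : (fun k => |sigmoid (T (W (φ k))) - s|) = (fun k => V (φ k + 1)) := by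
      funext k
      simp only [hV]
      rw [hWsucc (φ k)]
    have hφ1 : Filter.Tendsto (fun k => φ k + 1) Filter.atTop Filter.atTop :=
      Filter.tendsto_atTop_mono (fun k => Nat.le_succ (φ k)) hφ.tendsto_atTop
    have h3 : Filter.Tendsto (fun k => V (φ k + 1)) Filter.atTop (nhds v) :=
      hVtend.comp hφ1
    have hTv : |sigmoid (T wbar) - s| = v := tendsto_nhds_unique (h2 ▸ h1) h3
    have hstrict := lyap wstar γ hwstar hγ0 hγ2 c hc wbar hwbarne
    rw [← hT' wbar] at hstrict
    rw [hTv] at hstrict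
    rw [← hsdef] at hstrict
    have hwv : |sigmoid wbar - s| = v := by rw [hsigwbar, habs]
    rw [hwv] at hstrict
    exact lt_irrefl v hstrict
  have hVzero : Filter.Tendsto V Filter.atTop (nhds 0) := hv0 ▸ hVtend
  have hytend : Filter.Tendsto (fun t => sigmoid (W t)) Filter.atTop (nhds s) := by
    rw [tendsto_iff_dist_tendsto_zero]
    have : (fun t => dist (sigmoid (W t)) s) = V := by
      funext t
      simp only [hV, Real.dist_eq]
    rw [this]
    exact hVzero
  have hlogcont : ContinuousAt logit s := by
    apply ContinuousAt.sub
    · exact Real.continuousAt_log (ne_of_gt hs0)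
    · exact (Real.continuousAt_log (by intro h; rw [sub_eq_zero] at h; linarith [h.symm])).comp
        ((continuous_const.sub continuous_id).continuousAt)
  have hfin : Filter.Tendsto (fun t => logit (sigmoid (W t))) Filter.atTop (nhds (logit s)) :=
    hlogcont.tendsto.comp hytend
  have hlogits : logit s = wstar := logit_sig wstar
  have heqW : (fun t => logit (sigmoid (W t))) = W := by
    funext t
    exact logit_sig (W t)
  rw [heqW, hlogits] at hfin
  exact hfin
end
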